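/- Let μ₁,…,μₙ ∈ [1/2, 1], μ̄ = (1/n)∑ᵢ μᵢ and ν̄ = (1/n)∑ᵢ (2μᵢ - 1)². If 1/2 ≤ μ̄ ≤ 2/3, then ν̄ ≥ (1/3)·D(μ̄‖1-μ̄), where D(μ̄‖1-μ̄) = (2μ̄-1)·log(μ̄/(1-μ̄)). -/

import Mathlib

theorem nu_bar_ge_third_kl (n : ℕ) (hn : 1 ≤ n) (μ : Fin n → ℝ)
    (hμ : ∀ i, μ i ∈ Set.Icc (1/2 : ℝ) 1)
    (hlow : 1/2 ≤ (1 / (n:ℝ)) * ∑ j, μ j)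
    (hhigh : (1 / (n:ℝ)) * ∑ j, μ j ≤ 2/3) :
    (1 / (n:ℝ)) * ∑ i, (2 * μ i - 1) ^ 2
      ≥ (1/3) * ((2 * ((1 / (n:ℝ)) * ∑ j, μ j) - 1)
          * Real.log (((1 / (n:ℝ)) * ∑ j, μ j) / (1 - (1 / (n:ℝ)) * ∑ j, μ j))) := by
  have hn0 : (0:ℝ) < n := by exact_mod_cast hn
  set m : ℝ := (1 / (n:ℝ)) * ∑ j, μ j with hm
  -- Step 1: ν̄ ≥ (2m-1)^2 by Cauchy-Schwarz
  have key : ((∑ i, (2 * μ i - 1)) ^ 2 : ℝ) ≤ (n:ℝ) * ∑ i, (2 * μ i - 1) ^ 2 := by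
    have := sq_sum_le_card_mul_sum_sq (s := Finset.univ) (f := fun i => 2 * μ i - 1)
    simpa using this
  have hsum : (∑ i, (2 * μ i - 1) : ℝ) = 2 * ∑ j, μ j - n := by
    simp [Finset.sum_sub_distrib, Finset.mul_sum]
  have jensen : (2 * m - 1) ^ 2 ≤ (1 / (n:ℝ)) * ∑ i, (2 * μ i - 1) ^ 2 := by
    have h2 : (2 * m - 1) = (1 / (n:ℝ)) * (2 * ∑ j, μ j - n) := by
      field_simp [hm]
      rw [hm]; field_simp
    rw [h2, mul_pow, ← hsum]
    have hmul := mul_le_mul_of_nonneg_left key (by positivity : (0:ℝ) ≤ (1/(n:ℝ))^2)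
    have heq : (1/(n:ℝ))^2 * ((n:ℝ) * ∑ i, (2 * μ i - 1) ^ 2)
        = 1/(n:ℝ) * ∑ i, (2 * μ i - 1) ^ 2 := by
      field_simp
    linarith
  -- Step 2: log(m/(1-m)) ≤ 3(2m-1)
  have hm1 : m ≤ 2/3 := hhigh
  have hm0 : 1/2 ≤ m := hlow
  have h1m : (1:ℝ)/3 ≤ 1 - m := by linarith
  have hlog : Real.log (m / (1 - m)) ≤ 3 * (2 * m - 1) := by
    have hpos : (0:ℝ) < m / (1 - m) := by positivity
    have := Real.log_le_sub_one_of_pos hpos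
    have h2 : m / (1 - m) - 1 = (2 * m - 1) / (1 - m) := by
      field_simp; ring
    have h3 : (2 * m - 1) / (1 - m) ≤ 3 * (2 * m - 1) := by
      rw [div_le_iff₀ (by linarith)]
      nlinarith
    linarith
  have h2m1 : 0 ≤ 2 * m - 1 := by linarith
  have : (1/3) * ((2 * m - 1) * Real.log (m / (1 - m))) ≤ (2 * m - 1) ^ 2 := by
    nlinarith [mul_le_mul_of_nonneg_left hlog h2m1]
  linarith [jensen]
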